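/- Let H' be a contraction of a looped digraph H. Then H is a panchromatic pattern if and only if H' is a panchromatic pattern. -/

import Mathlib

/-- A walk in `D` (as a list of at least two vertices) whose sequence of
arc-colours (given by `ς`) forms a walk in `H`. -/
def IsHWalk {V W : Type} (D : V → V → Prop) (H : W → W → Prop) (ς : V → V → W)
    (l : List V) : Prop :=
  2 ≤ l.length ∧ l.Chain' D ∧ ((l.zip l.tail).map fun p => ς p.1 p.2).Chain' H

/-- There is an `H`-walk in `D` from `a` to `b`. -/
def HReach {V W : Type} (D : V → V → Prop) (H : W → W → Prop) (ς : V → V → W)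
    (a b : V) : Prop :=
  ∃ l : List V, IsHWalk D H ς l ∧ l.head? = some a ∧ l.getLast? = some b

/-- `K` is an `H`-kernel of the `H`-coloured digraph `D`: it is `H`-independent
and `H`-absorbent. -/
def IsHKernel {V W : Type} (D : V → V → Prop) (H : W → W → Prop) (ς : V → V → W)
    (K : Set V) : Prop :=
  (∀ a ∈ K, ∀ b ∈ K, a ≠ b → ¬ HReach D H ς a b) ∧
  (∀ v, v ∉ K → ∃ b ∈ K, HReach D H ς v b)

/-- `H` is a panchromatic pattern: every digraph with every `H`-colouring
admits an `H`-kernel. -/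
def IsPanchromatic {W : Type} (H : W → W → Prop) : Prop :=
  ∀ (V : Type) (D : V → V → Prop) (ς : V → V → W), ∃ K : Set V, IsHKernel D H ς K

/-- `H` is bicomplete: the vertex set splits as `X ⊔ Xᶜ`, both parts induce
complete digraphs (with loops), and all arcs from `Xᶜ` to `X` are present. -/
def IsBicomplete {W : Type} (H : W → W → Prop) : Prop :=
  ∃ X : Set W, (∀ a ∈ X, ∀ b ∈ X, H a b) ∧ (∀ a ∉ X, ∀ b ∉ X, H a b) ∧
    (∀ x ∈ X, ∀ y ∉ X, H y x)

/-- `H` is an expansion of `2K₁`: two nonempty classes, each inducing a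
complete looped digraph, with no arcs between them. -/
def IsExpansion2K1 {W : Type} (H : W → W → Prop) : Prop :=
  ∃ C : Set W, C.Nonempty ∧ Cᶜ.Nonempty ∧
    (∀ a ∈ C, ∀ b ∈ C, H a b) ∧ (∀ a ∈ Cᶜ, ∀ b ∈ Cᶜ, H a b) ∧
    (∀ a b, (a ∈ C ∧ b ∈ Cᶜ) ∨ (a ∈ Cᶜ ∧ b ∈ C) → ¬ H a b)

/-- If `H'` is a contraction of a looped digraph `H` (witnessed by the
surjective quotient map `f` onto the classes), then `H` is panchromatic iff
`H'` is. -/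
theorem stmt11 {W W' : Type} (H : W → W → Prop) (H' : W' → W' → Prop)
    (f : W → W') (hf : Function.Surjective f)
    (hloop : ∀ x, H x x)
    (hclass : ∀ x y, f x = f y → H x y)
    (hall : ∀ x y x' y', f x = f x' → f y = f y' → H x y → H x' y')
    (hH' : ∀ c d, H' c d ↔ ∃ x y, f x = c ∧ f y = d ∧ H x y) :
    IsPanchromatic H ↔ IsPanchromatic H' := by
  have hequiv : ∀ x y, H x y ↔ H' (f x) (f y) := by
    intro x y
    constructor
    · intro h; exact (hH' _ _).2 ⟨x, y, rfl, rfl, h⟩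
    · intro h
      obtain ⟨x', y', hx, hy, h⟩ := (hH' _ _).1 h
      exact hall x' y' x y hx hy h
  have hwalk : ∀ (V : Type) (D : V → V → Prop) (ς : V → V → W) (l : List V),
      IsHWalk D H ς l ↔ IsHWalk D H' (fun a b => f (ς a b)) l := by
    intro V D ς l
    unfold IsHWalk
    refine and_congr_right fun _ => and_congr_right fun _ => ?_
    rw [List.Chain', List.Chain', List.isChain_map, List.isChain_map]
    exact ⟨fun h => h.imp fun a b => (hequiv _ _).1,
      fun h => h.imp fun a b => (hequiv _ _).2⟩
  have hreach : ∀ (V : Type) (D : V → V → Prop) (ς : V → V → W) (a b : V),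
      HReach D H ς a b ↔ HReach D H' (fun a b => f (ς a b)) a b := by
    intro V D ς a b
    unfold HReach
    exact exists_congr fun l => and_congr_left' (hwalk V D ς l)
  constructor
  · intro hP V D ς'
    obtain ⟨g, hg⟩ := hf.hasRightInverse
    obtain ⟨K, hK1, hK2⟩ := hP V D (fun a b => g (ς' a b))
    have key : ∀ a b : V, HReach D H (fun a b => g (ς' a b)) a b ↔ HReach D H' ς' a b := by
      intro a b
      rw [hreach V D (fun a b => g (ς' a b)) a b]
      have : (fun a b : V => f (g (ς' a b))) = ς' := by
        funext a b; exact hg (ς' a b)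
      rw [this]
    refine ⟨K, fun a ha b hb hab h => hK1 a ha b hb hab ((key a b).2 h), fun v hv => ?_⟩
    obtain ⟨b, hb, h⟩ := hK2 v hv
    exact ⟨b, hb, (key v b).1 h⟩
  · intro hP V D ς
    obtain ⟨K, hK1, hK2⟩ := hP V D (fun a b => f (ς a b))
    refine ⟨K, fun a ha b hb hab h => hK1 a ha b hb hab ((hreach V D ς a b).1 h),
      fun v hv => ?_⟩
    obtain ⟨b, hb, h⟩ := hK2 v hv
    exact ⟨b, hb, (hreach V D ς v b).2 h⟩
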